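/- If A is a finite-dimensional complex unital Banach algebra and φ : A → ℂ is continuous with φ(1) = 1 and φ(x)φ(y) ∈ σ(xy) for all x,y ∈ A, then φ is a character of A. -/

import Mathlib

open Polynomial Set

section Aux

open Polynomial Set

lemma spec_finite_aux' {A : Type*} [Ring A] [Algebra ℂ A] [Nontrivial A] [FiniteDimensional ℂ A]
    (a : A) : (spectrum ℂ a).Finite := by
  have hint : IsIntegral ℂ a := IsIntegral.of_finite ℂ a
  have hp0 : minpoly ℂ a ≠ 0 := minpoly.ne_zero hint
  apply (Polynomial.finite_setOf_isRoot hp0).subset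
  intro z hz
  by_contra hroot
  set p := minpoly ℂ a with hp
  set c := p.eval z with hcdef
  have hc : c ≠ 0 := hroot
  obtain ⟨q, hq⟩ := Polynomial.X_sub_C_dvd_sub_C_eval (a := z) (p := p)
  have hev : aeval a p = 0 := minpoly.aeval ℂ a
  have key1 : (algebraMap ℂ A z - a) * aeval a q = algebraMap ℂ A c := by
    have h := congrArg (aeval a) hq
    rw [map_sub, hev, aeval_C, map_mul, map_sub, aeval_X, aeval_C, zero_sub] at h
    rw [← neg_sub a (algebraMap ℂ A z), neg_mul, ← h, neg_neg]
  have key2 : aeval a q * (algebraMap ℂ A z - a) = algebraMap ℂ A c := by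
    have hq2 : p - C c = q * (X - C z) := by rw [hq, mul_comm]
    have h := congrArg (aeval a) hq2
    rw [map_sub, hev, aeval_C, map_mul, map_sub, aeval_X, aeval_C, zero_sub] at h
    rw [← neg_sub a (algebraMap ℂ A z), mul_neg, ← h, neg_neg]
  have hunit : IsUnit (algebraMap ℂ A z - a) := by
    refine ⟨⟨algebraMap ℂ A z - a, algebraMap ℂ A c⁻¹ * aeval a q, ?_, ?_⟩, rfl⟩
    · rw [← mul_assoc, ← Algebra.commutes, mul_assoc, key1, ← map_mul, inv_mul_cancel₀ hc,
        map_one]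
    · rw [mul_assoc, key2, ← map_mul, inv_mul_cancel₀ hc, map_one]
  exact spectrum.mem_iff.mp hz hunit

lemma const_of_finite' {s F : Set ℂ} (hs : IsPreconnected s) {f : ℂ → ℂ}
    (hf : ContinuousOn f s) (hF : F.Finite) (hmem : ∀ z ∈ s, f z ∈ F)
    {a b : ℂ} (ha : a ∈ s) (hb : b ∈ s) : f a = f b := by
  by_contra hne
  have hT : IsPreconnected (f '' s) := hs.image f hf
  obtain ⟨U, V, hU, hV, hU1, hV1, hUV⟩ :=
    SeparatedNhds.of_isCompact_isClosed (isCompact_singleton (x := f a))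
      ((hF.diff : (F \ {f a}).Finite).isClosed) (Set.disjoint_left.mpr fun x hx hx2 => hx2.2 hx)
  have hsub : f '' s ⊆ U ∪ V := by
    rintro _ ⟨w, hw, rfl⟩
    by_cases h : f w = f a
    · exact Or.inl (hU1 (h ▸ rfl))
    · exact Or.inr (hV1 ⟨hmem w hw, h⟩)
  have h1 : (f '' s ∩ U).Nonempty := ⟨f a, ⟨a, ha, rfl⟩, hU1 rfl⟩
  have h2 : (f '' s ∩ V).Nonempty := ⟨f b, ⟨b, hb, rfl⟩, hV1 ⟨hmem b hb, fun h => hne h.symm⟩⟩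
  obtain ⟨x, -, hx⟩ := hT U V hU hV hsub h1 h2
  exact Set.disjoint_left.mp hUV hx.1 hx.2

end Aux

variable {A : Type*} [NormedRing A] [NormedAlgebra ℂ A] [CompleteSpace A] [FiniteDimensional ℂ A]

theorem stmt_9 (φ : A → ℂ) (hc : Continuous φ)
    (hone : φ 1 = 1)
    (hmul : ∀ x y : A, φ x * φ y ∈ spectrum ℂ (x * y)) :
    (∀ x y : A, φ (x + y) = φ x + φ y) ∧
    (∀ (c : ℂ) (x : A), φ (c • x) = c * φ x) ∧
    (∀ x y : A, φ (x * y) = φ x * φ y) := by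
  haveI hnt : Nontrivial A := by
    by_contra h
    rw [not_nontrivial_iff_subsingleton] at h
    exact spectrum.mem_iff.mp (hmul 1 1) (isUnit_of_subsingleton _)
  have spec_finite_aux : ∀ a : A, (spectrum ℂ a).Finite := fun a => spec_finite_aux' a
  have const_of_finite : ∀ {s F : Set ℂ}, IsPreconnected s → ∀ {f : ℂ → ℂ},
      ContinuousOn f s → F.Finite → (∀ z ∈ s, f z ∈ F) →
      ∀ {a b : ℂ}, a ∈ s → b ∈ s → f a = f b :=
    fun {s F} hs {f} hf hF hmem {a b} ha hb => const_of_finite' hs hf hF hmem ha hb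
  have h0 : φ 0 = 0 := by
    have h := hmul 0 1
    rwa [zero_mul, spectrum.zero_eq, hone, mul_one, Set.mem_singleton_iff] at h
  have hmem : ∀ x : A, φ x ∈ spectrum ℂ x := fun x => by
    have h := hmul x 1; rwa [hone, mul_one, mul_one] at h
  have hinv : ∀ u : Aˣ, φ (u : A) * φ ((↑u⁻¹ : Aˣ) : A) = 1 := fun u => by
    have h := hmul (u : A) ((↑u⁻¹ : Aˣ) : A)
    rwa [u.mul_inv, spectrum.one_eq, Set.mem_singleton_iff] at h
  -- Lemma A
  have lemA : ∀ (x : A) (u : Aˣ) (lam : ℂ), φ (x + lam • (u : A)) = φ x + lam * φ (u : A) := by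
    intro x u lam
    have hSfin : (spectrum ℂ (x * ((↑u⁻¹ : Aˣ) : A))).Finite := spec_finite_aux _
    set f : ℂ → ℂ := fun t => φ (x + t • (u : A)) * φ ((↑u⁻¹ : Aˣ) : A) - t with hfdef
    have hcont : Continuous f := by
      exact ((hc.comp (continuous_const.add (continuous_id.smul continuous_const))).mul
        continuous_const).sub continuous_id
    have hfm : ∀ t : ℂ, f t ∈ spectrum ℂ (x * ((↑u⁻¹ : Aˣ) : A)) := by
      intro t
      have h1 := hmul (x + t • (u : A)) ((↑u⁻¹ : Aˣ) : A)
      have h2 : (x + t • (u : A)) * ((↑u⁻¹ : Aˣ) : A)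
          = algebraMap ℂ A t + x * ((↑u⁻¹ : Aˣ) : A) := by
        rw [add_mul, smul_mul_assoc, Units.mul_inv, Algebra.algebraMap_eq_smul_one, add_comm]
      rw [h2, ← spectrum.singleton_add_eq] at h1
      obtain ⟨r, hr, s', hs', hrs⟩ := Set.mem_add.mp h1
      rw [Set.mem_singleton_iff] at hr
      have : f t = s' := by simp only [hfdef]; rw [← hrs, hr]; ring
      exact this ▸ hs'
    have hconst : f lam = f 0 :=
      const_of_finite isPreconnected_univ hcont.continuousOn hSfin (fun z _ => hfm z)
        (Set.mem_univ _) (Set.mem_univ _)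
    have hu1 : φ (u : A) * φ ((↑u⁻¹ : Aˣ) : A) = 1 := hinv u
    have hne : φ ((↑u⁻¹ : Aˣ) : A) ≠ 0 := fun h => by simp [h] at hu1
    have heq : φ (x + lam • (u : A)) * φ ((↑u⁻¹ : Aˣ) : A)
        = φ x * φ ((↑u⁻¹ : Aˣ) : A) + lam := by
      simpa [hfdef, sub_eq_iff_eq_add, add_comm] using hconst
    apply mul_right_cancel₀ hne
    rw [heq]
    linear_combination (-lam) * hu1
  have hsc1 : ∀ c : ℂ, φ (c • (1 : A)) = c := by
    intro c
    have h := lemA 0 1 c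
    simpa [h0, hone] using h
  have hunit : ∀ (y : A) (ε : ℂ) (hu : IsUnit (algebraMap ℂ A ε - y)),
      φ ((hu.unit : Aˣ) : A) = ε - φ y := by
    intro y ε hu
    have h := lemA y hu.unit 1
    have harg : y + (1 : ℂ) • ((hu.unit : Aˣ) : A) = ε • (1 : A) := by
      rw [hu.unit_spec, one_smul, Algebra.algebraMap_eq_smul_one]
      abel
    rw [harg, hsc1] at h
    linear_combination -h
  -- additivity
  have hadd : ∀ x y : A, φ (x + y) = φ x + φ y := by
    intro x y
    obtain ⟨ε, hε⟩ := (spec_finite_aux y).infinite_compl.nonempty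
    have hu : IsUnit (algebraMap ℂ A ε - y) := spectrum.notMem_iff.mp hε
    have hφu : φ ((hu.unit : Aˣ) : A) = ε - φ y := hunit y ε hu
    have harg : x + (-1 : ℂ) • ((hu.unit : Aˣ) : A) = (x + y) + (-ε) • (1 : A) := by
      rw [hu.unit_spec, Algebra.algebraMap_eq_smul_one]
      module
    have h := lemA x hu.unit (-1)
    rw [harg, hφu] at h
    have h2 := lemA (x + y) 1 (-ε)
    simp only [Units.val_one, hone] at h2
    rw [h2] at h
    linear_combination h
  -- homogeneity
  have hsmul : ∀ (c : ℂ) (x : A), φ (c • x) = c * φ x := by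
    intro c x
    obtain ⟨ε, hε⟩ := (spec_finite_aux x).infinite_compl.nonempty
    have hu : IsUnit (algebraMap ℂ A ε - x) := spectrum.notMem_iff.mp hε
    have hφu : φ ((hu.unit : Aˣ) : A) = ε - φ x := hunit x ε hu
    have harg : c • x = (c * ε) • (1 : A) + (0 + (-c) • ((hu.unit : Aˣ) : A)) := by
      rw [hu.unit_spec, Algebra.algebraMap_eq_smul_one]
      module
    rw [harg, hadd, hsc1, lemA 0 hu.unit (-c), h0, hφu]
    ring
  refine ⟨hadd, hsmul, ?_⟩
  -- multiplicativity
  intro x y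
  have hSfin := spec_finite_aux x
  have hD : IsPreconnected (spectrum ℂ x)ᶜ := by
    have := hSfin.countable.isConnected_compl_of_one_lt_rank
      (by rw [Complex.rank_real_complex]; norm_num)
    exact this.isPreconnected
  set g : ℂ → ℂ := fun t => (t * φ y - φ (x * y)) / (t - φ x) with hgdef
  have hden : ∀ t ∈ (spectrum ℂ x)ᶜ, t - φ x ≠ 0 := by
    intro t ht
    exact sub_ne_zero.mpr fun h => ht (h ▸ hmem x)
  have hgc : ContinuousOn g (spectrum ℂ x)ᶜ := by
    apply ContinuousOn.div
    · exact (continuousOn_id.mul continuousOn_const).sub continuousOn_const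
    · exact continuousOn_id.sub continuousOn_const
    · exact hden
  have hgm : ∀ t ∈ (spectrum ℂ x)ᶜ, g t ∈ spectrum ℂ y := by
    intro t ht
    have hu : IsUnit (algebraMap ℂ A t - x) := spectrum.notMem_iff.mp ht
    have hφu : φ ((hu.unit : Aˣ) : A) = t - φ x := hunit x t hu
    have hφuinv := hinv hu.unit
    rw [hφu] at hφuinv
    have hne := hden t ht
    have h2 : φ (((hu.unit⁻¹ : Aˣ)) : A) = (t - φ x)⁻¹ := by
      exact eq_inv_of_mul_eq_one_right hφuinv
    have h3 := hmul (((hu.unit⁻¹ : Aˣ)) : A) (((hu.unit : Aˣ)) * y)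
    have h4 : (((hu.unit⁻¹ : Aˣ)) : A) * (((hu.unit : Aˣ) : A) * y) = y := by
      rw [← mul_assoc, Units.inv_mul, one_mul]
    rw [h4] at h3
    have h5 : φ (((hu.unit : Aˣ) : A) * y) = t * φ y - φ (x * y) := by
      have harg : ((hu.unit : Aˣ) : A) * y = t • y + (-1 : ℂ) • (x * y) := by
        rw [hu.unit_spec, sub_mul, Algebra.smul_def]
        module
      rw [harg, hadd, hsmul, hsmul]
      ring
    rw [h2, h5] at h3
    have : g t = (t - φ x)⁻¹ * (t * φ y - φ (x * y)) := by
      rw [hgdef]; simp only; rw [div_eq_inv_mul]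
    rw [this]
    exact h3
  obtain ⟨t1, ht1⟩ := hSfin.infinite_compl.nonempty
  obtain ⟨t2, ht2⟩ := ((hSfin.union (Set.finite_singleton t1)).infinite_compl).nonempty
  rw [Set.compl_union, Set.mem_inter_iff] at ht2
  have ht2S : t2 ∈ (spectrum ℂ x)ᶜ := ht2.1
  have ht21 : t2 ≠ t1 := by simpa using ht2.2
  have hg12 : g t1 = g t2 :=
    const_of_finite hD hgc (spec_finite_aux y) hgm ht1 ht2S
  have hcross : (t1 * φ y - φ (x * y)) * (t2 - φ x) = (t2 * φ y - φ (x * y)) * (t1 - φ x) :=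
    (div_eq_div_iff (hden t1 ht1) (hden t2 ht2S)).mp hg12
  have hfin : (t2 - t1) * (φ (x * y) - φ x * φ y) = 0 := by linear_combination -hcross
  rcases mul_eq_zero.mp hfin with h | h
  · exact absurd (sub_eq_zero.mp h) ht21
  · linear_combination h
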